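/- arXiv:1303.5557 — 2 statements merged into one kernel-verified Lean document; each statement's English description precedes it below -/
import Mathlib

section
/- Let E be the dual of a separable Banach space E_*. If E has the uniform weak* Kadec-Klee property, then the weak* topology and the norm topology coincide on the unit sphere of E. -/
open NormedSpace Filter Metric Topology

/-- Uniform weak* Kadec-Klee property of the dual of `X`. -/
def UKKStar (X : Type*) [NormedAddCommGroup X] [NormedSpace ℝ X] : Prop :=
  ∀ ε > (0 : ℝ), ∃ δ : ℝ, 0 < δ ∧ δ < 1 ∧
    ∀ C : Set (StrongDual ℝ X), C ⊆ closedBall (0 : StrongDual ℝ X) 1 →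
      (∃ x : ℕ → StrongDual ℝ X, (∀ i, x i ∈ C) ∧ ∀ i j, i ≠ j → ε < ‖x i - x j‖) →
      ∃ y ∈ closure (StrongDual.toWeakDual '' C : Set (WeakDual ℝ X)),
        ‖WeakDual.toStrongDual y‖ < δ

/-- Key step: there is no sequence on the unit sphere of the dual that converges weak* to a
point of the sphere while staying norm-separated from it, if the dual has the UKK* property. -/
lemma ukkStar_no_separated_seq {X : Type*} [NormedAddCommGroup X] [NormedSpace ℝ X]
    (hUKK : UKKStar X) {x : StrongDual ℝ X} (hx : ‖x‖ = 1) {y : ℕ → StrongDual ℝ X}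
    (hy : ∀ n, ‖y n‖ = 1) {ε : ℝ} (hε : 0 < ε) (hsep : ∀ n, ε ≤ ‖y n - x‖)
    (hconv : Tendsto (fun n => StrongDual.toWeakDual (y n)) atTop (𝓝 (StrongDual.toWeakDual x))) :
    False := by
  -- pointwise (weak*) convergence
  have hpt : ∀ w : X, Tendsto (fun n => (y n - x) w) atTop (𝓝 0) := by
    intro w
    have h1 : Tendsto (fun n => (StrongDual.toWeakDual (y n)) w) atTop
        (𝓝 ((StrongDual.toWeakDual x) w)) := ((WeakDual.eval_continuous w).tendsto _).comp hconv
    have h2 : Tendsto (fun n => (y n) w - x w) atTop (𝓝 (x w - x w)) :=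
      h1.sub tendsto_const_nhds
    simpa [ContinuousLinearMap.sub_apply] using h2
  -- norming vectors
  have hvex : ∀ n, ∃ w : X, ‖w‖ < 1 ∧ ε/2 < ‖(y n - x) w‖ := by
    intro n
    exact (y n - x).exists_lt_apply_of_lt_opNorm (lt_of_lt_of_le (by linarith) (hsep n))
  choose v hv1 hv2 using hvex
  -- extract a separated subsequence
  have hstep : ∀ s : Finset ℕ, (∀ a ∈ s, True) → ∃ N, True ∧
      ∀ a ∈ s, a < N ∧ ‖(y N - x) (v a)‖ < ε/4 := by
    intro s _
    have hev : ∀ᶠ N in atTop, ∀ a ∈ s, a < N ∧ ‖(y N - x) (v a)‖ < ε/4 := by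
      rw [eventually_all_finset]
      intro a _
      exact (eventually_gt_atTop a).and
        (((NormedAddCommGroup.tendsto_nhds_zero).mp (hpt (v a))) (ε/4) (by positivity))
    obtain ⟨N, hN⟩ := hev.exists
    exact ⟨N, trivial, hN⟩
  obtain ⟨f, -, hf⟩ := exists_seq_of_forall_finset_exists (fun _ : ℕ => True)
    (fun a b => a < b ∧ ‖(y b - x) (v a)‖ < ε/4) hstep
  have hfmono : StrictMono f := fun m n h => (hf m n h).1
  -- pairwise separation
  have hpair : ∀ i j, i ≠ j → ε/4 < ‖y (f i) - y (f j)‖ := by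
    have key : ∀ i j, i < j → ε/4 < ‖y (f i) - y (f j)‖ := by
      intro i j hij
      have h1 : ε/2 < ‖(y (f i) - x) (v (f i))‖ := hv2 (f i)
      have h2 : ‖(y (f j) - x) (v (f i))‖ < ε/4 := (hf i j hij).2
      have h4 : (y (f i) - y (f j)) (v (f i)) =
          (y (f i) - x) (v (f i)) - (y (f j) - x) (v (f i)) := by
        simp [ContinuousLinearMap.sub_apply]
      have h5 : ‖(y (f i) - x) (v (f i))‖ - ‖(y (f j) - x) (v (f i))‖ ≤
          ‖(y (f i) - y (f j)) (v (f i))‖ := by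
        rw [h4]; exact norm_sub_norm_le _ _
      have h3 : ‖(y (f i) - y (f j)) (v (f i))‖ ≤ ‖y (f i) - y (f j)‖ :=
        (y (f i) - y (f j)).unit_le_opNorm _ (hv1 (f i)).le
      linarith
    intro i j hij
    rcases lt_or_gt_of_ne hij with h | h
    · exact key i j h
    · rw [norm_sub_rev]; exact key j i h
  -- apply UKK*
  obtain ⟨δ, hδ0, hδ1, hC⟩ := hUKK (ε/4) (by positivity)
  obtain ⟨y₀, hy₀mem, hy₀norm⟩ := hC (Set.range fun k => y (f k))
    (by rintro _ ⟨k, rfl⟩; simpa [mem_closedBall, dist_eq_norm] using (hy (f k)).le)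
    ⟨fun k => y (f k), fun k => ⟨k, rfl⟩, hpair⟩
  -- the weak* closure of the subsequence consists of points of norm one
  have hsub : Tendsto (fun k => StrongDual.toWeakDual (y (f k))) atTop (𝓝 (StrongDual.toWeakDual x)) :=
    hconv.comp (hfmono.tendsto_atTop)
  have hScompact : IsCompact (insert (StrongDual.toWeakDual x)
      (Set.range fun k => StrongDual.toWeakDual (y (f k)))) := hsub.isCompact_insert_range
  have hy₀S : y₀ ∈ insert (StrongDual.toWeakDual x)
      (Set.range fun k => StrongDual.toWeakDual (y (f k))) := by
    refine closure_minimal ?_ hScompact.isClosed hy₀mem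
    rintro _ ⟨_, ⟨k, rfl⟩, rfl⟩
    exact Set.mem_insert_of_mem _ ⟨k, rfl⟩
  have hnorm1 : ‖WeakDual.toStrongDual y₀‖ = 1 := by
    rcases hy₀S with h | ⟨k, hk⟩
    · rw [h]; exact hx
    · rw [← hk]; exact hy (f k)
  rw [hnorm1] at hy₀norm
  linarith

/-- If `X` is a separable Banach space and its dual has the UKK* property, then the weak*
topology and the norm topology coincide on the unit sphere of the dual: the inclusion of the
unit sphere (with the norm topology) into the weak* dual is an inducing map. -/
theorem ukkStar_weakStar_eq_norm_on_sphere (X : Type*) [NormedAddCommGroup X]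
    [NormedSpace ℝ X] [CompleteSpace X] [TopologicalSpace.SeparableSpace X]
    (hUKK : UKKStar X) :
    Topology.IsInducing
      (fun x : sphere (0 : StrongDual ℝ X) 1 => StrongDual.toWeakDual (x : StrongDual ℝ X)) := by
  haveI : Nonempty X := ⟨0⟩
  set F : sphere (0 : StrongDual ℝ X) 1 → WeakDual ℝ X :=
    fun x => StrongDual.toWeakDual (x : StrongDual ℝ X) with hF
  have hcont : Continuous F := Dual.toWeakDual_continuous.comp continuous_subtype_val
  rw [Topology.isInducing_iff_nhds]
  intro x
  refine le_antisymm ((hcont.tendsto x).le_comap) ?_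
  -- Countable generation of the comap filter, via embedding the ball into ℝ^ℕ
  set D : ℕ → X := TopologicalSpace.denseSeq X with hD
  set π : WeakDual ℝ X → (ℕ → ℝ) := fun g n => g (D n) with hπdef
  have hπ : Continuous π := continuous_pi fun n => WeakDual.eval_continuous (D n)
  set K : Set (WeakDual ℝ X) := WeakDual.toStrongDual ⁻¹' closedBall (0 : StrongDual ℝ X) 1 with hKdef
  have hK : IsCompact K := WeakDual.isCompact_closedBall (𝕜 := ℝ) (E := X) 0 1
  haveI : CompactSpace K := isCompact_iff_compactSpace.mp hK
  set πK : K → (ℕ → ℝ) := fun g => π g.val with hπK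
  have hinj : Function.Injective πK := by
    intro a b hab
    apply Subtype.ext
    apply DFunLike.coe_injective
    refine Continuous.ext_on (TopologicalSpace.denseRange_denseSeq X)
      (WeakDual.toStrongDual a.val).continuous (WeakDual.toStrongDual b.val).continuous ?_
    rintro _ ⟨n, rfl⟩
    exact congrFun hab n
  have hemb : Topology.IsClosedEmbedding πK :=
    (hπ.comp continuous_subtype_val).isClosedEmbedding hinj
  set j : sphere (0 : StrongDual ℝ X) 1 → K := fun z => ⟨StrongDual.toWeakDual (z : StrongDual ℝ X), by
    simp only [hKdef, Set.mem_preimage, mem_closedBall, dist_zero_right]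
    have := mem_sphere_zero_iff_norm.mp z.2
    simp [this]⟩ with hj
  have hFeq : comap F (𝓝 (F x)) = comap (πK ∘ j) (𝓝 ((πK ∘ j) x)) := by
    have e1 : F = Subtype.val ∘ j := rfl
    calc comap F (𝓝 (F x)) = comap j (comap Subtype.val (𝓝 ((j x) : WeakDual ℝ X))) := by
          rw [e1, ← comap_comap]; rfl
      _ = comap j (𝓝 (j x)) := by rw [← nhds_induced]
      _ = comap j (comap πK (𝓝 (πK (j x)))) := by
          rw [← hemb.isInducing.nhds_eq_comap]
      _ = comap (πK ∘ j) (𝓝 ((πK ∘ j) x)) := by rw [comap_comap]; rfl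
  haveI hcg : (comap F (𝓝 (F x))).IsCountablyGenerated := by
    rw [hFeq]; exact Filter.comap.isCountablyGenerated _ _
  -- now a sequential argument
  by_contra hle
  obtain ⟨U, hU, hUF⟩ := Filter.not_le.mp hle
  obtain ⟨ε, hε, hball⟩ := Metric.mem_nhds_iff.mp hU
  have hballF : ball x ε ∉ comap F (𝓝 (F x)) := fun h => hUF (mem_of_superset h hball)
  obtain ⟨s, hs⟩ := (comap F (𝓝 (F x))).exists_antitone_basis
  have hsn : ∀ n, ∃ z, z ∈ s n ∧ z ∉ ball x ε := by
    intro n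
    by_contra h
    push_neg at h
    exact hballF (hs.1.mem_iff.mpr ⟨n, trivial, fun z hz => h z hz⟩)
  choose y hy1 hy2 using hsn
  have htends : Tendsto y atTop (comap F (𝓝 (F x))) := hs.tendsto hy1
  have hconv : Tendsto (fun n => StrongDual.toWeakDual ((y n : sphere (0 : StrongDual ℝ X) 1) : StrongDual ℝ X))
      atTop (𝓝 (StrongDual.toWeakDual (x : StrongDual ℝ X))) := by
    have := tendsto_comap_iff.mp htends
    exact this
  have hsep : ∀ n, ε ≤ ‖((y n : sphere (0 : StrongDual ℝ X) 1) : StrongDual ℝ X) - (x : StrongDual ℝ X)‖ := by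
    intro n
    have h := hy2 n
    rw [mem_ball, not_lt, Subtype.dist_eq, dist_eq_norm] at h
    exact h
  exact ukkStar_no_separated_seq hUKK (mem_sphere_zero_iff_norm.mp x.2)
    (fun n => mem_sphere_zero_iff_norm.mp (y n).2) hε hsep hconv
end

section
/- Every irreducible representation of the C*-algebra K(H) of compact operators on a Hilbert space H is unitarily equivalent to the identity representation. -/
set_option linter.unusedSectionVars false

open ContinuousLinearMap

noncomputable section NaimarkAux

variable {H : Type*} [NormedAddCommGroup H] [InnerProductSpace ℂ H] [CompleteSpace H]

local notation "⟪" x ", " y "⟫" => @inner ℂ _ _ x y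

/-- The rank one operator `v ↦ ⟪y, v⟫ • x`. -/
def rankOne (x y : H) : H →L[ℂ] H := (innerSL ℂ y).smulRight x

lemma rankOne_apply (x y v : H) : rankOne x y v = ⟪y, v⟫ • x := rfl

lemma isCompactOperator_rankOne (x y : H) : IsCompactOperator (rankOne x y) := by
  refine ⟨(fun c : ℂ => c • x) '' Metric.closedBall 0 1,
    ((isCompact_closedBall (0:ℂ) 1).image (by fun_prop)), ?_⟩
  have h : (innerSL ℂ y) ⁻¹' Metric.closedBall 0 1 ∈ nhds (0 : H) :=
    (innerSL ℂ y).continuous.continuousAt.preimage_mem_nhds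
      (by simpa using Metric.closedBall_mem_nhds (0:ℂ) one_pos)
  filter_upwards [h] with v hv
  exact ⟨⟪y, v⟫, hv, rfl⟩

lemma adjoint_rankOne (x y : H) : adjoint (rankOne x y) = rankOne y x := by
  symm
  rw [eq_adjoint_iff]
  intro u v
  simp only [rankOne_apply, inner_smul_left, inner_smul_right, inner_conj_symm]
  ring

lemma rankOne_comp_rankOne (x y z w : H) :
    rankOne x y * rankOne z w = ⟪y, z⟫ • rankOne x w := by
  ext v
  simp only [mul_apply_eq_comp, rankOne_apply, inner_smul_right, smul_smul, smul_apply]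
  ring_nf

lemma comp_rankOne (S : H →L[ℂ] H) (x y : H) : S * rankOne x y = rankOne (S x) y := by
  ext v
  simp [mul_apply, rankOne_apply]

lemma rankOne_comp (S : H →L[ℂ] H) (x y : H) :
    rankOne x y * S = rankOne x (adjoint S y) := by
  ext v
  simp [mul_apply, rankOne_apply, adjoint_inner_left]

lemma rankOne_add_left (x x' y : H) : rankOne (x + x') y = rankOne x y + rankOne x' y := by
  ext v; simp [rankOne_apply, smul_add]

lemma rankOne_smul_left (c : ℂ) (x y : H) : rankOne (c • x) y = c • rankOne x y := by
  ext v; rw [smul_apply, rankOne_apply, rankOne_apply, smul_comm]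

end NaimarkAux

section Main

set_option maxHeartbeats 1000000

local notation "⟪" x ", " y "⟫" => @inner ℂ _ _ x y

lemma isCompactOperator_sum {H : Type*} [NormedAddCommGroup H] [InnerProductSpace ℂ H]
    {ι : Type*} (s : Finset ι) (f : ι → (H →L[ℂ] H))
    (hf : ∀ i, IsCompactOperator (f i)) :
    IsCompactOperator (⇑(∑ i ∈ s, f i)) := by
  classical
  induction s using Finset.induction with
  | empty => simpa using isCompactOperator_zero
  | insert _ _ hx ih =>
      rw [Finset.sum_insert hx]
      exact (hf _).add ih

/-- Naimark: every irreducible *-representation of the C*-algebra `K(H)` of compact operators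
on a Hilbert space `H` is unitarily equivalent to the identity representation.  Here a
representation of `K(H)` on a Hilbert space `H'` is a map `π` defined on the bounded operators
which is additive, `ℂ`-homogeneous, multiplicative and star-preserving on the compact
operators, and irreducibility means that `π` is nonzero on the compacts and the only closed
subspaces invariant under all `π S`, `S` compact, are `⊥` and `⊤`. -/
theorem irreducible_rep_of_compacts_equiv_identity
    (H H' : Type*) [NormedAddCommGroup H] [InnerProductSpace ℂ H] [CompleteSpace H]
    [NormedAddCommGroup H'] [InnerProductSpace ℂ H'] [CompleteSpace H']
    (π : (H →L[ℂ] H) → (H' →L[ℂ] H'))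
    (hadd : ∀ S T : H →L[ℂ] H, IsCompactOperator S → IsCompactOperator T →
      π (S + T) = π S + π T)
    (hsmul : ∀ (c : ℂ) (S : H →L[ℂ] H), IsCompactOperator S → π (c • S) = c • π S)
    (hmul : ∀ S T : H →L[ℂ] H, IsCompactOperator S → IsCompactOperator T →
      π (S * T) = π S * π T)
    (hstar : ∀ S : H →L[ℂ] H, IsCompactOperator S → π (adjoint S) = adjoint (π S))
    (hnonzero : ∃ S : H →L[ℂ] H, IsCompactOperator S ∧ π S ≠ 0)
    (hirred : ∀ W : Submodule ℂ H', IsClosed (W : Set H') →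
      (∀ S : H →L[ℂ] H, IsCompactOperator S → ∀ y ∈ W, π S y ∈ W) → W = ⊥ ∨ W = ⊤) :
    ∃ U : H ≃ₗᵢ[ℂ] H', ∀ S : H →L[ℂ] H, IsCompactOperator S →
      ∀ x : H, U (S x) = π S (U x) := by
  classical
  obtain ⟨S₀, hS₀c, hS₀⟩ := hnonzero
  have hπ0 : π 0 = 0 := by
    have h := hadd 0 0 isCompactOperator_zero isCompactOperator_zero
    rw [add_zero] at h
    exact left_eq_add.mp h
  -- `H` is nontrivial
  have hnt : Nontrivial H := by
    by_contra h
    rw [not_nontrivial_iff_subsingleton] at h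
    have hz : S₀ = 0 := by
      ext x
      rw [Subsingleton.elim x 0]
      simp
    exact hS₀ (by rw [hz, hπ0])
  obtain ⟨e, he⟩ := exists_norm_eq H (zero_le_one)
  have hee : ⟪e, e⟫ = 1 := by
    rw [inner_self_eq_norm_sq_to_K, he]
    norm_num
  set p : H →L[ℂ] H := rankOne e e with hp
  have hpp : p * p = p := by
    rw [hp, rankOne_comp_rankOne, hee, one_smul]
  -- π applied to a finite sum of rank ones vanishing
  have hπsum : ∀ {ι : Type} (s : Finset ι) (f g : ι → H),
      (∀ x y : H, π (rankOne x y) = 0) →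
      π (∑ i ∈ s, rankOne (f i) (g i)) = 0 := by
    intro ι s f g h0
    induction s using Finset.induction with
    | empty => simpa using hπ0
    | @insert a s ha ih =>
        rw [Finset.sum_insert ha,
          hadd _ _ (isCompactOperator_rankOne _ _)
            (isCompactOperator_sum s _ (fun i => isCompactOperator_rankOne _ _)),
          ih, h0, add_zero]
  -- the C⋆-algebra generated by the rank one operators
  set R : Set (H →L[ℂ] H) := {T | ∃ x y : H, T = rankOne x y} with hR
  set F : NonUnitalStarSubalgebra ℂ (H →L[ℂ] H) := NonUnitalStarAlgebra.adjoin ℂ R with hF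
  set K : NonUnitalStarSubalgebra ℂ (H →L[ℂ] H) := F.topologicalClosure with hK
  haveI hKclosed : IsClosed (K : Set (H →L[ℂ] H)) := F.isClosed_topologicalClosure
  have hFc : ∀ T ∈ F, IsCompactOperator T ∧ IsCompactOperator (⇑(star T)) := by
    intro T hT
    induction hT using NonUnitalStarAlgebra.adjoin_induction with
    | mem x hx =>
        obtain ⟨a, b, rfl⟩ := hx
        refine ⟨isCompactOperator_rankOne a b, ?_⟩
        rw [star_eq_adjoint, adjoint_rankOne]
        exact isCompactOperator_rankOne b a
    | add x y hx hy ihx ihy =>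
        exact ⟨ihx.1.add ihy.1, by rw [star_add]; exact ihx.2.add ihy.2⟩
    | zero => exact ⟨isCompactOperator_zero, by rw [star_zero]; exact isCompactOperator_zero⟩
    | mul x y hx hy ihx ihy =>
        refine ⟨ihx.1.comp_clm y, ?_⟩
        rw [star_mul]
        exact ihy.2.comp_clm (star x)
    | smul c x hx ihx =>
        exact ⟨ihx.1.smul c, by rw [star_smul]; exact ihx.2.smul _⟩
    | star x hx ihx => exact ⟨ihx.2, by rw [star_star]; exact ihx.1⟩
  have hKmem : ∀ T ∈ K, IsCompactOperator T := by
    have hsub : (K : Set (H →L[ℂ] H)) ⊆ {f : H →L[ℂ] H | IsCompactOperator f} :=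
      closure_minimal (fun x hx => (hFc x hx).1) isClosed_setOf_isCompactOperator
    exact fun T hT => hsub hT
  -- the restriction of `π` to `K` as a star algebra homomorphism
  let φ : K →⋆ₙₐ[ℂ] (H' →L[ℂ] H') :=
    { toFun := fun a => π a
      map_add' := fun a b => hadd _ _ (hKmem _ a.2) (hKmem _ b.2)
      map_zero' := hπ0
      map_mul' := fun a b => hmul _ _ (hKmem _ a.2) (hKmem _ b.2)
      map_smul' := fun c a => hsmul c _ (hKmem _ a.2)
      map_star' := fun a => by
        have h := hstar _ (hKmem _ a.2)
        rw [← star_eq_adjoint, ← star_eq_adjoint] at h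
        exact h }
  have hcontr : ∀ a : K, ‖π (a : H →L[ℂ] H)‖ ≤ ‖(a : H →L[ℂ] H)‖ := fun a =>
    NonUnitalStarAlgHom.norm_apply_le φ a
  -- finite-rank approximation of compact operators
  have happrox : ∀ (S : H →L[ℂ] H), IsCompactOperator S → ∀ ε : ℝ, 0 < ε →
      ∃ (n : ℕ) (f g : Fin n → H), ‖S - ∑ i, rankOne (f i) (g i)‖ ≤ ε := by
    intro S hSc ε hε
    have hcpt : IsCompact (closure (⇑S '' Metric.closedBall 0 1)) :=
      hSc.isCompact_closure_image_closedBall 1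
    have htb : TotallyBounded (⇑S '' Metric.closedBall 0 1) :=
      hcpt.totallyBounded.subset subset_closure
    rw [Metric.totallyBounded_iff] at htb
    obtain ⟨t, htfin, hcover⟩ := htb ε hε
    set V : Submodule ℂ H := Submodule.span ℂ t with hV
    haveI : FiniteDimensional ℂ V := FiniteDimensional.span_of_finite ℂ htfin
    haveI : CompleteSpace V := FiniteDimensional.complete ℂ V
    set P : H →L[ℂ] H := V.subtypeL ∘L V.orthogonalProjectionOnto with hP
    have hmin : ∀ (y c : H), c ∈ V → ‖y - P y‖ ≤ ‖y - c‖ := by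
      intro y c hc
      rw [show P y = V.starProjection y from rfl, Submodule.starProjection_minimal]
      exact ciInf_le ⟨0, by rintro x ⟨z, rfl⟩; exact norm_nonneg _⟩ (⟨c, hc⟩ : V)
    have hb : ∀ u : H, ‖(S - P ∘L S) u‖ ≤ ε * ‖u‖ := by
      intro u
      rcases eq_or_ne u 0 with rfl | hu
      · simp
      · have hnu : 0 < ‖u‖ := norm_pos_iff.mpr hu
        have hcne : (‖u‖ : ℂ) ≠ 0 := by
          simpa using hnu.ne'
        set w : H := (‖u‖ : ℂ)⁻¹ • u with hw
        have hwball : w ∈ Metric.closedBall (0 : H) 1 := by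
          rw [Metric.mem_closedBall, dist_zero_right, hw, norm_smul, norm_inv]
          simp [Complex.norm_real, abs_of_nonneg hnu.le, inv_mul_cancel₀ hnu.ne']
        have hmem : S w ∈ ⋃ y ∈ t, Metric.ball y ε := hcover ⟨w, hwball, rfl⟩
        rw [Set.mem_iUnion₂] at hmem
        obtain ⟨c, hct, hc⟩ := hmem
        have h1 : ‖S w - P (S w)‖ ≤ ‖S w - c‖ := hmin _ c (Submodule.subset_span hct)
        have h2 : ‖S w - c‖ < ε := by rwa [Metric.mem_ball, dist_eq_norm] at hc
        have h3 : (S - P ∘L S) u = (‖u‖ : ℂ) • ((S - P ∘L S) w) := by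
          rw [hw, map_smul, smul_smul, mul_inv_cancel₀ hcne, one_smul]
        have h4 : (S - P ∘L S) w = S w - P (S w) := by
          simp [ContinuousLinearMap.sub_apply]
        have h5 : ‖(S - P ∘L S) u‖ = ‖u‖ * ‖S w - P (S w)‖ := by
          rw [h3, h4, norm_smul]
          simp [Complex.norm_real, abs_of_nonneg hnu.le]
        rw [h5, mul_comm]
        exact mul_le_mul_of_nonneg_right (h1.trans h2.le) hnu.le
    set b := stdOrthonormalBasis ℂ V with hbdef
    refine ⟨Module.finrank ℂ V, fun i => (b i : H), fun i => adjoint S (b i : H), ?_⟩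
    have hPS : P ∘L S = ∑ i, rankOne ((b i : H)) (adjoint S (b i : H)) := by
      ext u
      have hrep : P (S u) = ∑ i, ⟪(b i : H), S u⟫ • (b i : H) := by
        rw [show P (S u) = (V.orthogonalProjectionOnto (S u) : H) from rfl]
        conv_lhs => rw [← b.sum_repr' (V.orthogonalProjectionOnto (S u))]
        push_cast
        refine Finset.sum_congr rfl fun i _ => ?_
        rw [Submodule.inner_orthogonalProjection_eq_of_mem_left]
      simp only [ContinuousLinearMap.sum_apply, rankOne_apply, adjoint_inner_left,
        ContinuousLinearMap.comp_apply, hrep]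
    rw [← hPS]
    exact ContinuousLinearMap.opNorm_le_bound _ hε.le hb
  -- `π` does not kill the projection `p`
  have hπp : π p ≠ 0 := by
    intro hq
    have h0 : ∀ x y : H, π (rankOne x y) = 0 := by
      intro x y
      have e1 : p * rankOne e y = rankOne e y := by
        rw [hp, rankOne_comp_rankOne, hee, one_smul]
      have e2 : rankOne x e * rankOne e y = rankOne x y := by
        rw [rankOne_comp_rankOne, hee, one_smul]
      have hcalc : π (rankOne x y) = π (rankOne x e) * (π p * π (rankOne e y)) := by
        rw [← hmul p _ (by rw [hp]; exact isCompactOperator_rankOne e e)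
          (isCompactOperator_rankOne e y), e1,
          ← hmul _ _ (isCompactOperator_rankOne x e) (isCompactOperator_rankOne e y), e2]
      rw [hcalc, hq, zero_mul, mul_zero]
    have key : ∀ ε : ℝ, 0 < ε → ‖π S₀‖ ≤ ε := by
      intro ε hε
      obtain ⟨n, f, g, hfg⟩ := happrox S₀ hS₀c ε hε
      set T : H →L[ℂ] H := ∑ i, rankOne (f i) (g i) with hT
      have hTF : T ∈ F := by
        refine sum_mem fun i _ => ?_
        exact NonUnitalStarAlgebra.subset_adjoin ℂ R ⟨f i, g i, rfl⟩
      have hS₀K : S₀ ∈ K := by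
        have hclos : S₀ ∈ closure (F : Set (H →L[ℂ] H)) := by
          refine Metric.mem_closure_iff.mpr fun δ hδ => ?_
          obtain ⟨n', f', g', h'⟩ := happrox S₀ hS₀c (δ / 2) (by positivity)
          refine ⟨∑ i : Fin n', rankOne (f' i) (g' i), sum_mem fun i _ =>
            NonUnitalStarAlgebra.subset_adjoin ℂ R ⟨f' i, g' i, rfl⟩, ?_⟩
          rw [dist_eq_norm]
          linarith
        exact hclos
      have hTK : T ∈ K := F.le_topologicalClosure hTF
      have hTc : IsCompactOperator T :=
        isCompactOperator_sum Finset.univ _ fun i => isCompactOperator_rankOne _ _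
      have hπT : π T = 0 := hπsum Finset.univ f g h0
      have hsplit : π S₀ = π (S₀ - T) := by
        conv_lhs => rw [show S₀ = (S₀ - T) + T from (sub_add_cancel S₀ T).symm]
        rw [hadd _ _ (hS₀c.sub hTc) hTc, hπT, add_zero]
      rw [hsplit]
      exact (hcontr ⟨S₀ - T, sub_mem hS₀K hTK⟩).trans hfg
    have hfin : ‖π S₀‖ ≤ 0 := by
      by_contra hlt
      push_neg at hlt
      have := key (‖π S₀‖ / 2) (by positivity)
      linarith
    exact hS₀ (norm_le_zero_iff.mp hfin)
  -- construct the unit vector `ξ` fixed by `q = π p`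
  have hpc : IsCompactOperator (⇑p) := isCompactOperator_rankOne e e
  have hq2 : π p * π p = π p := by rw [← hmul p p hpc hpc, hpp]
  obtain ⟨y₀, hy₀⟩ : ∃ y, π p y ≠ 0 := by
    by_contra h
    push_neg at h
    exact hπp (ContinuousLinearMap.ext fun y => by rw [h y, ContinuousLinearMap.zero_apply])
  set ξ : H' := ((‖π p y₀‖ : ℝ) : ℂ)⁻¹ • π p y₀ with hξdef
  have hqy : π p (π p y₀) = π p y₀ := by
    have h := congrArg (fun A : H' →L[ℂ] H' => A y₀) hq2
    simpa [ContinuousLinearMap.mul_apply] using h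
  have hqξ : π p ξ = ξ := by rw [hξdef, map_smul, hqy]
  have hξ : ‖ξ‖ = 1 := by
    have hco : ‖((‖π p y₀‖ : ℝ) : ℂ)‖ = ‖π p y₀‖ := by simp
    rw [hξdef, norm_smul, norm_inv, hco, inv_mul_cancel₀ (norm_ne_zero_iff.mpr hy₀)]
  have hξinner : ⟪ξ, ξ⟫ = 1 := by
    rw [inner_self_eq_norm_sq_to_K, hξ]
    norm_num
  -- the intertwining isometry
  have hcr : ∀ x y : H, IsCompactOperator (⇑(rankOne x y)) := isCompactOperator_rankOne
  set Ulin : H →ₗ[ℂ] H' :=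
    { toFun := fun x => π (rankOne x e) ξ
      map_add' := fun x y => by
        show π (rankOne (x + y) e) ξ = π (rankOne x e) ξ + π (rankOne y e) ξ
        rw [rankOne_add_left, hadd _ _ (hcr x e) (hcr y e), ContinuousLinearMap.add_apply]
      map_smul' := fun c x => by
        show π (rankOne (c • x) e) ξ = c • π (rankOne x e) ξ
        rw [rankOne_smul_left, hsmul c _ (hcr x e), ContinuousLinearMap.smul_apply] } with hUlin
  have hUinner : ∀ x y : H, ⟪Ulin x, Ulin y⟫ = ⟪x, y⟫ := by
    intro x y
    have h1 : π (rankOne e x) = adjoint (π (rankOne x e)) := by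
      rw [← hstar _ (hcr x e), adjoint_rankOne]
    have h2 : adjoint (π (rankOne x e)) * π (rankOne y e) = ⟪x, y⟫ • π p := by
      rw [← h1, ← hmul _ _ (hcr e x) (hcr y e), rankOne_comp_rankOne, ← hp,
        hsmul _ _ hpc]
    calc ⟪Ulin x, Ulin y⟫ = ⟪π (rankOne x e) ξ, π (rankOne y e) ξ⟫ := rfl
      _ = ⟪ξ, adjoint (π (rankOne x e)) (π (rankOne y e) ξ)⟫ :=
          (adjoint_inner_right _ _ _).symm
      _ = ⟪ξ, (⟪x, y⟫ • π p) ξ⟫ := by rw [← ContinuousLinearMap.mul_apply, h2]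
      _ = ⟪x, y⟫ * ⟪ξ, ξ⟫ := by
          rw [ContinuousLinearMap.smul_apply, hqξ, inner_smul_right]
      _ = ⟪x, y⟫ := by rw [hξinner, mul_one]
  have hUnorm : ∀ x : H, ‖Ulin x‖ = ‖x‖ := by
    intro x
    have h2 : ‖Ulin x‖ ^ 2 = ‖x‖ ^ 2 := by
      have h := hUinner x x
      rw [inner_self_eq_norm_sq_to_K, inner_self_eq_norm_sq_to_K] at h
      exact_mod_cast h
    calc ‖Ulin x‖ = Real.sqrt (‖Ulin x‖ ^ 2) := (Real.sqrt_sq (norm_nonneg _)).symm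
      _ = Real.sqrt (‖x‖ ^ 2) := by rw [h2]
      _ = ‖x‖ := Real.sqrt_sq (norm_nonneg _)
  set U₀ : H →ₗᵢ[ℂ] H' := ⟨Ulin, hUnorm⟩ with hU₀
  have hUS : ∀ S : H →L[ℂ] H, IsCompactOperator S → ∀ x : H,
      Ulin (S x) = π S (Ulin x) := by
    intro S hS x
    show π (rankOne (S x) e) ξ = π S (π (rankOne x e) ξ)
    rw [← comp_rankOne S x e, hmul _ _ hS (hcr x e), ContinuousLinearMap.mul_apply]
  -- surjectivity via irreducibility
  set W : Submodule ℂ H' := LinearMap.range Ulin with hW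
  have hWclosed : IsClosed (W : Set H') := by
    have hrange : (W : Set H') = Set.range Ulin := by
      ext z
      simp [hW, LinearMap.mem_range, Set.mem_range]
    rw [hrange]
    exact (U₀.isometry.isClosedEmbedding).isClosed_range
  have hWinv : ∀ S : H →L[ℂ] H, IsCompactOperator S → ∀ z ∈ W, π S z ∈ W := by
    intro S hS z hz
    rw [hW, LinearMap.mem_range] at hz
    obtain ⟨x, rfl⟩ := hz
    exact ⟨S x, hUS S hS x⟩
  have hWne : W ≠ ⊥ := by
    intro hbot
    have hmem : Ulin e ∈ W := ⟨e, rfl⟩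
    have hUe : Ulin e = ξ := by
      show π (rankOne e e) ξ = ξ
      rw [← hp]
      exact hqξ
    rw [hbot, Submodule.mem_bot, hUe] at hmem
    rw [hmem, norm_zero] at hξ
    exact one_ne_zero hξ.symm
  have hWtop : W = ⊤ := (hirred W hWclosed hWinv).resolve_left hWne
  have hsurj : Function.Surjective Ulin := fun z => by
    have hz : z ∈ W := by rw [hWtop]; trivial
    rwa [hW, LinearMap.mem_range] at hz
  refine ⟨LinearIsometryEquiv.ofSurjective U₀ hsurj, fun S hS x => ?_⟩
  have hcoe : ⇑(LinearIsometryEquiv.ofSurjective U₀ hsurj) = ⇑U₀ :=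
    LinearIsometryEquiv.coe_ofSurjective U₀ hsurj
  rw [hcoe]
  exact hUS S hS x

end Main
end
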